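/- Let $m:\{1,\dots,n+1\}\times\{1,\dots,n+1\}\to\mathbb{R}$ be a matrix such that for every transposition of adjacent-type the 'rectangle inequality' holds: for all $i<j$ and $k<l$, $m(i,k)+m(j,l) \geq m(i,l)+m(j,k)$. Then the map $\sigma\mapsto \sum_i m(i,\sigma(i))$ on $S_{n+1}$ is maximized by the identity permutation, and if at least two permutations attain the maximum, then some adjacent transposition $(i\; i{+}1)$ also attains it, so that $m(i,i)+m(i{+}1,i{+}1) = m(i,i{+}1)+m(i{+}1,i)$ for some $i\in\{1,\dots,n\}$. -/

import Mathlib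

open Finset

namespace Stmt2Aux

/-- inversion count -/
def inv {N : ℕ} (σ : Equiv.Perm (Fin N)) : ℕ :=
  (Finset.univ.filter (fun p : Fin N × Fin N => p.1 < p.2 ∧ σ p.2 < σ p.1)).card

lemma swap_lt_swap {n : ℕ} (i : Fin n) {a b : Fin (n+1)} (hab : a < b)
    (hne : (a, b) ≠ (i.castSucc, i.succ)) :
    Equiv.swap i.castSucc i.succ a < Equiv.swap i.castSucc i.succ b := by
  set c := i.castSucc with hc
  set s := i.succ with hs
  have hcs : c < s := (Fin.castSucc_lt_succ : i.castSucc < i.succ)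
  rcases eq_or_ne a c with rfl | hac
  · rcases eq_or_ne b s with rfl | hbs
    · exact absurd rfl hne
    · have hbc : b ≠ c := hab.ne'
      rw [Equiv.swap_apply_left, Equiv.swap_apply_of_ne_of_ne hbc hbs]
      have : s ≤ b := Fin.castSucc_lt_iff_succ_le.mp hab
      exact lt_of_le_of_ne this (Ne.symm hbs)
  · rcases eq_or_ne a s with rfl | has
    · have hbc : b ≠ c := fun h => absurd (h ▸ hab) (not_lt.mpr hcs.le)
      have hbs : b ≠ s := hab.ne'
      rw [Equiv.swap_apply_right, Equiv.swap_apply_of_ne_of_ne hbc hbs]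
      exact hcs.trans hab
    · rw [Equiv.swap_apply_of_ne_of_ne hac has]
      rcases eq_or_ne b c with rfl | hbc
      · rw [Equiv.swap_apply_left]; exact hab.trans hcs
      · rcases eq_or_ne b s with rfl | hbs
        · rw [Equiv.swap_apply_right]
          have : a ≤ c := Fin.le_castSucc_iff.mpr hab
          exact lt_of_le_of_ne this hac
        · rw [Equiv.swap_apply_of_ne_of_ne hbc hbs]; exact hab

lemma inv_swap_lt {n : ℕ} (σ : Equiv.Perm (Fin (n+1))) (i : Fin n)
    (hdes : σ i.succ < σ i.castSucc) :
    inv (σ * Equiv.swap i.castSucc i.succ) < inv σ := by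
  set c := i.castSucc
  set s := i.succ
  have hcs : c < s := (Fin.castSucc_lt_succ : i.castSucc < i.succ)
  set t := Equiv.swap c s with ht
  set A := (Finset.univ.filter (fun p : Fin (n+1) × Fin (n+1) => p.1 < p.2 ∧ (σ * t) p.2 < (σ * t) p.1)) with hA
  set B := (Finset.univ.filter (fun p : Fin (n+1) × Fin (n+1) => p.1 < p.2 ∧ σ p.2 < σ p.1)) with hB
  have hmem : ((c, s) : Fin (n+1) × Fin (n+1)) ∈ B := by
    simp only [hB, mem_filter, mem_univ, true_and]
    exact ⟨hcs, hdes⟩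
  have hcard : A.card ≤ (B.erase (c, s)).card := by
    apply Finset.card_le_card_of_injOn (fun p => (t p.1, t p.2))
    · intro p hp
      simp only [Finset.mem_coe, hA, mem_filter, mem_univ, true_and] at hp
      obtain ⟨hp1, hp2⟩ := hp
      have hpne : (p.1, p.2) ≠ (c, s) := by
        intro h
        have h1 : p.1 = c := congrArg Prod.fst h
        have h2 : p.2 = s := congrArg Prod.snd h
        rw [h1, h2] at hp2
        simp only [Equiv.Perm.mul_apply, ht, Equiv.swap_apply_left,
          Equiv.swap_apply_right] at hp2
        exact absurd (hp2.trans hdes) (lt_irrefl _)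
      have hlt : t p.1 < t p.2 := swap_lt_swap i hp1 hpne
      rw [Finset.mem_coe, Finset.mem_erase]
      constructor
      · intro h
        have h1 : t p.1 = c := congrArg Prod.fst h
        have h2 : t p.2 = s := congrArg Prod.snd h
        have e1 : p.1 = s := by
          have := congrArg t h1
          simpa [ht, Equiv.swap_apply_self, Equiv.swap_apply_left] using this
        have e2 : p.2 = c := by
          have := congrArg t h2
          simpa [ht, Equiv.swap_apply_self, Equiv.swap_apply_right] using this
        rw [e1, e2] at hp1
        exact absurd (hp1.trans hcs) (lt_irrefl _)
      · simp only [hB, mem_filter, mem_univ, true_and]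
        refine ⟨hlt, ?_⟩
        simpa [Equiv.Perm.mul_apply] using hp2
    · intro p _ q _ h
      have h1 : t p.1 = t q.1 := congrArg Prod.fst h
      have h2 : t p.2 = t q.2 := congrArg Prod.snd h
      exact Prod.ext (t.injective h1) (t.injective h2)
  calc A.card ≤ (B.erase (c, s)).card := hcard
    _ < B.card := Finset.card_erase_lt_of_mem hmem

lemma sum_swap_eq {n : ℕ} (m : Fin (n+1) → Fin (n+1) → ℝ) (σ : Equiv.Perm (Fin (n+1)))
    {a b : Fin (n+1)} (hab : a ≠ b) :
    ∑ x, m x ((σ * Equiv.swap a b) x)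
      = ∑ x, m x (σ x) + (m a (σ b) + m b (σ a)) - (m a (σ a) + m b (σ b)) := by
  have key : ∑ x, (m x ((σ * Equiv.swap a b) x) - m x (σ x))
      = ∑ x ∈ ({a, b} : Finset (Fin (n+1))), (m x ((σ * Equiv.swap a b) x) - m x (σ x)) := by
    refine (Finset.sum_subset (Finset.subset_univ _) ?_).symm
    intro x _ hx
    simp only [Finset.mem_insert, Finset.mem_singleton, not_or] at hx
    rw [Equiv.Perm.mul_apply, Equiv.swap_apply_of_ne_of_ne hx.1 hx.2, sub_self]
  rw [Finset.sum_sub_distrib] at key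
  have h2 : ∑ x ∈ ({a, b} : Finset (Fin (n+1))), (m x ((σ * Equiv.swap a b) x) - m x (σ x))
      = (m a (σ b) - m a (σ a)) + (m b (σ a) - m b (σ b)) := by
    rw [Finset.sum_pair hab]
    simp [Equiv.Perm.mul_apply, Equiv.swap_apply_left, Equiv.swap_apply_right]
  rw [h2] at key
  linarith

lemma exists_descent {n : ℕ} (σ : Equiv.Perm (Fin (n+1))) (hσ : σ ≠ 1) :
    ∃ i : Fin n, σ i.succ < σ i.castSucc := by
  by_contra h
  push_neg at h
  have hsm : StrictMono σ := by
    rw [Fin.strictMono_iff_lt_succ]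
    intro i
    exact lt_of_le_of_ne (h i) (fun he => ((Fin.castSucc_lt_succ : i.castSucc < i.succ)).ne
      (σ.injective he))
  haveI : WellFoundedLT (Fin (n+1)) := Finite.to_wellFoundedLT
  have : (fun x => σ x) = (id : Fin (n+1) → Fin (n+1)) := by
    apply (StrictMono.range_inj (f := fun x => σ x)
      (g := (id : Fin (n+1) → Fin (n+1))) hsm strictMono_id).1
    rw [Set.range_id]
    exact Equiv.range_eq_univ σ
  apply hσ
  apply Equiv.ext
  intro x
  rw [Equiv.Perm.one_apply]
  exact congrFun this x

lemma max_id {n : ℕ} (m : Fin (n + 1) → Fin (n + 1) → ℝ)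
    (hrect : ∀ i j k l : Fin (n + 1), i < j → k < l → m i l + m j k ≤ m i k + m j l) :
    ∀ σ : Equiv.Perm (Fin (n + 1)), ∑ i, m i (σ i) ≤ ∑ i, m i i := by
  suffices H : ∀ k (σ : Equiv.Perm (Fin (n+1))), inv σ = k → ∑ i, m i (σ i) ≤ ∑ i, m i i from
    fun σ => H (inv σ) σ rfl
  intro k
  induction k using Nat.strong_induction_on with
  | _ k IH =>
  intro σ hk
  rcases eq_or_ne σ 1 with rfl | hσ
  · simp
  · obtain ⟨i, hdes⟩ := exists_descent σ hσ
    set τ := σ * Equiv.swap i.castSucc i.succ with hτ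
    have hle : ∑ x, m x (σ x) ≤ ∑ x, m x (τ x) := by
      rw [hτ, sum_swap_eq m σ ((Fin.castSucc_lt_succ : i.castSucc < i.succ)).ne]
      have := hrect i.castSucc i.succ (σ i.succ) (σ i.castSucc)
        ((Fin.castSucc_lt_succ : i.castSucc < i.succ)) hdes
      linarith
    subst hk
    exact hle.trans (IH (inv τ) (inv_swap_lt σ i hdes) τ rfl)

end Stmt2Aux

open Stmt2Aux in
/-- If `m` satisfies the rectangle inequality, then the identity permutation maximizes
`σ ↦ ∑ i, m i (σ i)`, and if the maximum is attained by at least two permutations, then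
some adjacent transposition also attains it, i.e. some rectangle inequality is equality. -/
theorem stmt2 {n : ℕ} (m : Fin (n + 1) → Fin (n + 1) → ℝ)
    (hrect : ∀ i j k l : Fin (n + 1), i < j → k < l → m i l + m j k ≤ m i k + m j l) :
    (∀ σ : Equiv.Perm (Fin (n + 1)), ∑ i, m i (σ i) ≤ ∑ i, m i i) ∧
    ((∃ σ : Equiv.Perm (Fin (n + 1)), σ ≠ 1 ∧ ∑ i, m i (σ i) = ∑ i, m i i) →
      ∃ i : Fin n, m i.castSucc i.castSucc + m i.succ i.succ =
        m i.castSucc i.succ + m i.succ i.castSucc) := by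
  refine ⟨max_id m hrect, ?_⟩
  rintro ⟨σ, hσ, hmax⟩
  suffices H : ∀ k (σ : Equiv.Perm (Fin (n+1))), inv σ = k → σ ≠ 1 →
      ∑ i, m i (σ i) = ∑ i, m i i →
      ∃ i : Fin n, m i.castSucc i.castSucc + m i.succ i.succ =
        m i.castSucc i.succ + m i.succ i.castSucc from H (inv σ) σ rfl hσ hmax
  clear hσ hmax σ
  intro k
  induction k using Nat.strong_induction_on with
  | _ k IH =>
  intro σ hk hσ hmax
  obtain ⟨i, hdes⟩ := exists_descent σ hσ
  set τ := σ * Equiv.swap i.castSucc i.succ with hτ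
  have hsum : ∑ x, m x (τ x) = ∑ x, m x (σ x)
      + (m i.castSucc (σ i.succ) + m i.succ (σ i.castSucc))
      - (m i.castSucc (σ i.castSucc) + m i.succ (σ i.succ)) :=
    sum_swap_eq m σ ((Fin.castSucc_lt_succ : i.castSucc < i.succ)).ne
  have hle : ∑ x, m x (σ x) ≤ ∑ x, m x (τ x) := by
    have := hrect i.castSucc i.succ (σ i.succ) (σ i.castSucc)
      ((Fin.castSucc_lt_succ : i.castSucc < i.succ)) hdes
    linarith
  have hτmax : ∑ x, m x (τ x) = ∑ x, m x x :=
    le_antisymm (max_id m hrect τ) (hmax ▸ hle)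
  rcases eq_or_ne τ 1 with h1 | h1
  · -- σ = swap, get equality
    have hσswap : σ = Equiv.swap i.castSucc i.succ := by
      have : τ * Equiv.swap i.castSucc i.succ = σ := by
        rw [hτ, mul_assoc, Equiv.swap_mul_self, mul_one]
      rw [← this, h1, one_mul]
    refine ⟨i, ?_⟩
    have hsum1 : ∑ x, m x (σ x)
        = ∑ x, m x x + (m i.castSucc i.succ + m i.succ i.castSucc)
          - (m i.castSucc i.castSucc + m i.succ i.succ) := by
      have := sum_swap_eq m 1 (a := i.castSucc) (b := i.succ) ((Fin.castSucc_lt_succ : i.castSucc < i.succ)).ne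
      simp only [one_mul, Equiv.Perm.one_apply] at this
      rw [hσswap]
      simpa using this
    rw [hmax] at hsum1
    linarith
  · subst hk
    exact IH (inv τ) (inv_swap_lt σ i hdes) τ rfl h1 hτmax
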